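/- Let ρ₀ : ℝ^d → [0,∞] be a measurable function that is locally integrable on ℝ^d \ {0}, and suppose there exist z₀ ∈ ℝ^d and ε > 0 such that ∫_{{|z−z₀| ≤ ε}} 1/ρ₀(z) dz < ∞ (with the convention 1/0 = +∞). Then there exist a closed subset F of the closed ball {z ∈ ℝ^d : |z−z₀| ≤ ε} and a constant δ > 0 such that inf_{x ∈ ℝ^d, |x| ≤ δ} ∫_F min(ρ₀(z), ρ₀(z−x)) dz > 0. -/

import Mathlib

open MeasureTheory
open scoped ENNReal

/-- If `ρ₀ : ℝ^d → [0,∞]` is measurable, locally integrable on `ℝ^d \ {0}`,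
and `∫_{|z - z₀| ≤ ε} 1/ρ₀(z) dz < ∞` for some `z₀` and `ε > 0`, then there are a closed set
`F ⊆ closedBall z₀ ε` and `δ > 0` with `inf_{|x| ≤ δ} ∫_F min(ρ₀(z), ρ₀(z - x)) dz > 0`. -/
theorem stmt0 {d : ℕ} (ρ₀ : EuclideanSpace ℝ (Fin d) → ℝ≥0∞)
    (hmeas : Measurable ρ₀)
    (hloc : ∀ K : Set (EuclideanSpace ℝ (Fin d)),
      IsCompact K → (0 : EuclideanSpace ℝ (Fin d)) ∉ K → ∫⁻ z in K, ρ₀ z < ∞)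
    (z₀ : EuclideanSpace ℝ (Fin d)) (ε : ℝ) (hε : 0 < ε)
    (hinv : ∫⁻ z in Metric.closedBall z₀ ε, (ρ₀ z)⁻¹ < ∞) :
    ∃ F : Set (EuclideanSpace ℝ (Fin d)), IsClosed F ∧ F ⊆ Metric.closedBall z₀ ε ∧
      ∃ δ > (0 : ℝ), 0 < ⨅ x : {x : EuclideanSpace ℝ (Fin d) // ‖x‖ ≤ δ},
        ∫⁻ z in F, min (ρ₀ z) (ρ₀ (z - x.1)) := by
  classical
  set μ : Measure (EuclideanSpace ℝ (Fin d)) := volume with hμ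
  set B := Metric.closedBall z₀ ε with hBdef
  have hBmeas : MeasurableSet B := measurableSet_closedBall
  set m := μ B with hmdef
  have hm0 : m ≠ 0 := (Metric.measure_closedBall_pos μ z₀ hε).ne'
  have hmtop : m ≠ ∞ := measure_closedBall_lt_top.ne
  set I := ∫⁻ z in B, (ρ₀ z)⁻¹ ∂μ with hIdef
  have hI : I ≠ ∞ := hinv.ne
  have hI1 : (8 : ℝ≥0∞) * (I + 1) ≠ 0 := by simp
  have hI1' : (8 : ℝ≥0∞) * (I + 1) ≠ ∞ := by
    refine ENNReal.mul_ne_top (by simp) (by simp [hI])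
  set c : ℝ≥0∞ := m * (8 * (I + 1))⁻¹ with hcdef
  have hc0 : c ≠ 0 := by
    simp only [hcdef, ne_eq, mul_eq_zero, not_or]
    exact ⟨hm0, ENNReal.inv_ne_zero.2 hI1'⟩
  have hctop : c ≠ ∞ := ENNReal.mul_ne_top hmtop (by simp [hI1])
  -- the small set S and the good set A
  set S := B ∩ {z | ρ₀ z < c} with hSdef
  set A := B ∩ {z | c ≤ ρ₀ z} with hAdef
  have hSmeas : MeasurableSet S := hBmeas.inter (hmeas measurableSet_Iio)
  have hAmeas : MeasurableSet A := hBmeas.inter (hmeas measurableSet_Ici)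
  -- 8 * μ S ≤ m
  have hS8 : 8 * μ S ≤ m := by
    have h1 : c⁻¹ * μ S ≤ I := by
      rw [← setLIntegral_const S c⁻¹]
      refine le_trans (setLIntegral_mono' hSmeas fun z hz => ?_)
        (lintegral_mono_set (Set.inter_subset_left))
      exact ENNReal.inv_le_inv.2 hz.2.le
    have h2 : μ S ≤ c * I := by
      have := mul_le_mul_right h1 c
      rwa [← mul_assoc, ENNReal.mul_inv_cancel hc0 hctop, one_mul] at this
    calc 8 * μ S ≤ 8 * (c * I) := by exact mul_le_mul_right h2 8
      _ ≤ 8 * (c * (I + 1)) := by gcongr; exact le_self_add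
      _ = m * ((8 * (I + 1))⁻¹ * (8 * (I + 1))) := by rw [hcdef]; ring
      _ = m := by rw [ENNReal.inv_mul_cancel hI1 hI1', mul_one]
  -- m ≤ μ A + μ S
  have hAS : m ≤ μ A + μ S := by
    have : B ⊆ A ∪ S := by
      intro z hz
      rcases le_or_gt c (ρ₀ z) with h | h
      · exact Or.inl ⟨hz, h⟩
      · exact Or.inr ⟨hz, h⟩
    exact (measure_mono this).trans (measure_union_le _ _)
  have hAne : μ A ≠ ∞ := (lt_of_le_of_lt (measure_mono Set.inter_subset_left)
    (lt_top_iff_ne_top.2 hmtop)).ne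
  -- compact F inside A
  obtain ⟨F, hFA, hFcomp, hFm⟩ : ∃ F ⊆ A, IsCompact F ∧ μ A < μ F + m / 8 :=
    hAmeas.exists_isCompact_lt_add hAne (by simp [ENNReal.div_eq_zero_iff, hm0])
  have hFB : F ⊆ B := hFA.trans Set.inter_subset_left
  have hFmeas : MeasurableSet F := hFcomp.isClosed.measurableSet
  -- choose δ
  obtain ⟨δ, hδpos, hδ⟩ : ∃ δ > (0:ℝ), 8 * (ε + δ) ^ d ≤ 9 * ε ^ d := by
    have hcont : ContinuousAt (fun t : ℝ => 8 * (ε + t) ^ d) 0 := by fun_prop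
    have hlt : (fun t : ℝ => 8 * (ε + t) ^ d) 0 < 9 * ε ^ d := by
      simp only [add_zero]
      nlinarith [pow_pos hε d]
    have hev : ∀ᶠ t in nhds (0:ℝ), 8 * (ε + t) ^ d < 9 * ε ^ d :=
      hcont (Iio_mem_nhds hlt)
    rcases Metric.mem_nhds_iff.1 hev with ⟨r, hr, hball⟩
    refine ⟨r / 2, by positivity, ?_⟩
    have : (r / 2 : ℝ) ∈ Metric.ball (0:ℝ) r := by
      simp only [Metric.mem_ball, dist_zero_right, Real.norm_eq_abs]
      rw [abs_of_pos (by positivity : (0:ℝ) < r / 2)]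
      linarith
    exact (hball this).le
  refine ⟨F, hFcomp.isClosed, hFB, δ, hδpos, ?_⟩
  -- the big ball estimate
  have hbig : 8 * μ (Metric.closedBall z₀ (ε + δ)) ≤ 9 * m := by
    rw [hmdef, hBdef, Measure.addHaar_closedBall μ z₀ (by linarith : (0:ℝ) ≤ ε + δ),
      Measure.addHaar_closedBall μ z₀ hε.le, finrank_euclideanSpace_fin]
    rw [← mul_assoc, ← mul_assoc]
    gcongr ?_ * _
    calc (8:ℝ≥0∞) * ENNReal.ofReal ((ε + δ) ^ d)
        = ENNReal.ofReal (8 * (ε + δ) ^ d) := by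
          rw [ENNReal.ofReal_mul (by norm_num)]; norm_num
      _ ≤ ENNReal.ofReal (9 * ε ^ d) := ENNReal.ofReal_le_ofReal hδ
      _ = 9 * ENNReal.ofReal (ε ^ d) := by
          rw [ENNReal.ofReal_mul (by norm_num)]; norm_num
  -- lower bound for the infimum
  have key : ∀ x : EuclideanSpace ℝ (Fin d), ‖x‖ ≤ δ →
      c * (m / 8) ≤ ∫⁻ z in F, min (ρ₀ z) (ρ₀ (z - x)) ∂μ := by
    intro x hx
    set T := (fun z : EuclideanSpace ℝ (Fin d) => z - x) ⁻¹' A with hTdef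
    have hTmeas : MeasurableSet T := (measurable_id.sub_const x) hAmeas
    have hTμ : μ T = μ A := by
      have : T = (fun z => z + (-x)) ⁻¹' A := by
        ext z; simp [hTdef, sub_eq_add_neg]
      rw [this, measure_preimage_add_right]
    have hsub : F ∪ T ⊆ Metric.closedBall z₀ (ε + δ) := by
      rintro z (hz | hz)
      · exact Metric.closedBall_subset_closedBall (by linarith) (hFB hz)
      · have h1 : z - x ∈ B := Set.inter_subset_left hz
        have h2 : dist (z - x) z₀ ≤ ε := Metric.mem_closedBall.1 h1
        have : dist z z₀ ≤ dist z (z - x) + dist (z - x) z₀ := dist_triangle _ _ _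
        have h3 : dist z (z - x) = ‖x‖ := by
          rw [dist_eq_norm]; congr 1; abel
        refine Metric.mem_closedBall.2 ?_
        rw [h3] at this; linarith
    -- measure of the intersection
    have hinter : m / 8 ≤ μ (F ∩ T) := by
      have hUI' : μ (F ∪ T) + μ (F ∩ T) = μ F + μ T :=
        measure_union_add_inter' hFmeas T
      have h16 : 16 * m ≤ 12 * m + 8 * μ (F ∩ T) := by
        have e2 : 8 * m ≤ 8 * μ A + m := by
          calc 8 * m ≤ 8 * (μ A + μ S) := by gcongr
            _ = 8 * μ A + 8 * μ S := by ring
            _ ≤ 8 * μ A + m := add_le_add_right hS8 _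
        have e3 : 8 * μ A ≤ 8 * μ F + m := by
          calc 8 * μ A ≤ 8 * (μ F + m / 8) := mul_le_mul_right hFm.le 8
            _ = 8 * μ F + 8 * (m / 8) := by ring
            _ = 8 * μ F + m := by rw [ENNReal.mul_div_cancel' (by norm_num) (by norm_num)]
        have e5 : 8 * (μ F + μ T) ≤ 9 * m + 8 * μ (F ∩ T) := by
          calc 8 * (μ F + μ T) = 8 * (μ (F ∪ T) + μ (F ∩ T)) := by rw [hUI']
            _ = 8 * μ (F ∪ T) + 8 * μ (F ∩ T) := by ring
            _ ≤ 8 * μ (Metric.closedBall z₀ (ε + δ)) + 8 * μ (F ∩ T) :=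
                add_le_add (mul_le_mul_right (measure_mono hsub) 8) le_rfl
            _ ≤ 9 * m + 8 * μ (F ∩ T) := add_le_add_left hbig _
        calc 16 * m = 8 * m + 8 * m := by ring
          _ ≤ (8 * μ A + m) + (8 * μ A + m) := add_le_add e2 e2
          _ = 8 * μ A + 8 * μ A + 2 * m := by ring
          _ ≤ (8 * μ F + m) + 8 * μ T + 2 * m := by
              rw [hTμ]; exact add_le_add (add_le_add_left e3 _) (le_refl _)
          _ = 8 * (μ F + μ T) + 3 * m := by ring
          _ ≤ (9 * m + 8 * μ (F ∩ T)) + 3 * m := add_le_add_left e5 _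
          _ = 12 * m + 8 * μ (F ∩ T) := by ring
      -- cancel 12 * m
      have h4 : 4 * m ≤ 8 * μ (F ∩ T) := by
        have h12 : (12 : ℝ≥0∞) * m ≠ ∞ := ENNReal.mul_ne_top (by norm_num) hmtop
        have : 12 * m + 4 * m ≤ 12 * m + 8 * μ (F ∩ T) := by
          calc 12 * m + 4 * m = 16 * m := by ring
            _ ≤ 12 * m + 8 * μ (F ∩ T) := h16
        exact (ENNReal.add_le_add_iff_left h12).1 this
      rw [ENNReal.div_le_iff_le_mul (Or.inl (by norm_num)) (Or.inl (by norm_num))]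
      calc m ≤ 4 * m := by
            nth_rewrite 1 [← one_mul m]; gcongr; norm_num
        _ ≤ 8 * μ (F ∩ T) := h4
        _ = μ (F ∩ T) * 8 := by ring
    -- integral lower bound
    calc c * (m / 8) ≤ c * μ (F ∩ T) := by gcongr
      _ = ∫⁻ _ in F ∩ T, c ∂μ := (setLIntegral_const _ _).symm
      _ ≤ ∫⁻ z in F ∩ T, min (ρ₀ z) (ρ₀ (z - x)) ∂μ := by
          refine setLIntegral_mono' (hFmeas.inter hTmeas) fun z hz => ?_
          exact le_min (hFA hz.1).2 hz.2.2
      _ ≤ ∫⁻ z in F, min (ρ₀ z) (ρ₀ (z - x)) ∂μ :=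
          lintegral_mono_set Set.inter_subset_left
  refine lt_of_lt_of_le ?_ (le_iInf fun x => key x.1 x.2)
  exact ENNReal.mul_pos hc0 (by simp [ENNReal.div_eq_zero_iff, hm0])
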